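/- Let P be a path on n ≥ 1 vertices and B = (b_1,...,b_c) a list of budgets with c ≥ 2 (when n ≥ 2). Then P admits a proper coloring with color i used at most b_i times if and only if Σ_{i=1}^c min(b_i, ⌈n/2⌉) ≥ n. -/

import Mathlib

open Finset

/-- Greedy partial sums: `pathT n m j` is the total allocated to blocks `< j`,
capped at `n`. -/
def pathT (n : ℕ) (m : ℕ → ℕ) : ℕ → ℕ
  | 0 => 0
  | j+1 => min (pathT n m j + m j) n

lemma pathT_le (n : ℕ) (m : ℕ → ℕ) : ∀ j, pathT n m j ≤ n
  | 0 => Nat.zero_le n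
  | j+1 => min_le_right _ _

lemma pathT_succ (n : ℕ) (m : ℕ → ℕ) (j : ℕ) :
    pathT n m (j+1) = min (pathT n m j + m j) n := rfl

lemma pathT_mono_succ (n : ℕ) (m : ℕ → ℕ) (j : ℕ) :
    pathT n m j ≤ pathT n m (j+1) := by
  rw [pathT_succ]
  have := pathT_le n m j
  omega

lemma pathT_ge (n : ℕ) (m : ℕ → ℕ) : ∀ j, min (∑ i ∈ range j, m i) n ≤ pathT n m j
  | 0 => by simp [pathT]
  | j+1 => by
    have ih := pathT_ge n m j
    rw [pathT_succ, Finset.sum_range_succ]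
    omega

lemma pathT_le_mul (n : ℕ) (m : ℕ → ℕ) (h : ℕ) (hm : ∀ j, m j ≤ h) :
    ∀ j, pathT n m j ≤ j * h
  | 0 => by simp [pathT]
  | j+1 => by
    have ih := pathT_le_mul n m h hm j
    have := hm j
    rw [pathT_succ]
    have : pathT n m j + m j ≤ j * h + h := by omega
    calc min (pathT n m j + m j) n ≤ pathT n m j + m j := min_le_left _ _
    _ ≤ j * h + h := this
    _ = (j+1) * h := by ring

lemma pathT_ge_mul (n : ℕ) (m : ℕ → ℕ) (h : ℕ) (J : ℕ) (hm : ∀ i < J, h ≤ m i) :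
    ∀ j ≤ J, min (j * h) n ≤ pathT n m j := by
  intro j
  induction j with
  | zero => simp [pathT]
  | succ j ih =>
    intro hj
    have ih' := ih (by omega)
    have hmj := hm j (by omega)
    rw [pathT_succ]
    have : (j+1) * h = j * h + h := by ring
    omega

theorem stmt10 (n c : ℕ) (hn : 1 ≤ n) (hc : 2 ≤ n → 2 ≤ c) (b : Fin c → ℕ) :
    (∃ φ : Fin n → Fin c,
      (∀ u v, (SimpleGraph.pathGraph n).Adj u v → φ u ≠ φ v) ∧
      ∀ i, (univ.filter fun v => φ v = i).card ≤ b i) ↔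
    n ≤ ∑ i, min (b i) ((n + 1) / 2) := by
  constructor
  · rintro ⟨φ, hproper, hbud⟩
    have hpart : (univ : Finset (Fin n)).card
        = ∑ i : Fin c, (univ.filter fun v => φ v = i).card :=
      Finset.card_eq_sum_card_fiberwise (fun v _ => Finset.mem_univ (φ v))
    have hcap : ∀ i : Fin c, (univ.filter fun v => φ v = i).card ≤ (n+1)/2 := by
      intro i
      have := Finset.card_le_card_of_injOn (fun v : Fin n => v.val / 2)
        (s := univ.filter fun v => φ v = i) (t := Finset.range ((n+1)/2))
        (by
          intro v _
          simp only [Finset.mem_coe, Finset.mem_range]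
          have := v.isLt
          omega)
        (by
          intro u hu v hv huv
          simp only [Finset.coe_filter, Set.mem_setOf_eq, Finset.mem_univ, true_and] at hu hv
          by_contra hne
          have hval : u.val ≠ v.val := fun h => hne (Fin.ext h)
          have hadj : (SimpleGraph.pathGraph n).Adj u v := by
            rw [SimpleGraph.pathGraph_adj]
            simp only at huv
            omega
          exact hproper u v hadj (hu.trans hv.symm))
      simpa using this
    have : n ≤ ∑ i : Fin c, (univ.filter fun v => φ v = i).card := by
      simp only [Finset.card_univ, Fintype.card_fin] at hpart
      omega
    calc n ≤ ∑ i : Fin c, (univ.filter fun v => φ v = i).card := this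
      _ ≤ ∑ i, min (b i) ((n+1)/2) :=
        Finset.sum_le_sum fun i _ => le_min (hbud i) (hcap i)
  · intro hsum
    set hh := (n+1)/2 with hhh
    have hh1 : 1 ≤ hh := by omega
    have hc1 : 1 ≤ c := by
      rcases Nat.eq_zero_or_pos c with h | h
      · subst h; simp at hsum; omega
      · exact h
    set M : Fin c → ℕ := fun i => min (b i) hh with hM
    set π : Equiv.Perm (Fin c) := Fin.revPerm.trans (Tuple.sort M) with hπ
    have hanti : ∀ i j : Fin c, i ≤ j → M (π j) ≤ M (π i) := by
      intro i j hij
      have : Fin.rev j ≤ Fin.rev i := by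
        rw [Fin.le_def, Fin.val_rev, Fin.val_rev]
        rw [Fin.le_def] at hij
        omega
      exact Tuple.monotone_sort M this
    set m : ℕ → ℕ := fun j => if h : j < c then M (π ⟨j, h⟩) else 0 with hm
    have hm_anti : ∀ i j : ℕ, i ≤ j → m j ≤ m i := by
      intro i j hij
      by_cases hj : j < c
      · have hi : i < c := by omega
        simp only [hm, dif_pos hj, dif_pos hi]
        exact hanti ⟨i, hi⟩ ⟨j, hj⟩ hij
      · simp [hm, dif_neg hj]
    have hm_le : ∀ j, m j ≤ hh := by
      intro j
      by_cases hj : j < c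
      · simp only [hm, dif_pos hj, hM]; exact min_le_right _ _
      · simp [hm, dif_neg hj]
    set T : ℕ → ℕ := pathT n m with hT
    have hTsum : ∑ i ∈ range c, m i = ∑ i, M i := by
      rw [← Fin.sum_univ_eq_sum_range]
      rw [← Equiv.sum_comp π M]
      apply Finset.sum_congr rfl
      intro i _
      simp [hm, i.isLt]
    have hTc : T c = n := by
      have h1 : min (∑ i ∈ range c, m i) n ≤ T c := pathT_ge n m c
      have h2 : T c ≤ n := pathT_le n m c
      rw [hTsum] at h1
      have h3 : n ≤ ∑ i, M i := hsum
      omega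
    -- the block-index function
    set F : ℕ → ℕ := fun p => sInf {j | p < T (j+1)} with hF
    have hFmem : ∀ p, p < n → p < T (F p + 1) := by
      intro p hp
      have hne : (c-1) ∈ {j | p < T (j+1)} := by
        simp only [Set.mem_setOf_eq]
        have : c - 1 + 1 = c := by omega
        rw [this, hTc]; exact hp
      exact Nat.sInf_mem ⟨_, hne⟩
    have hFlt : ∀ p, p < n → F p < c := by
      intro p hp
      have hne : (c-1) ∈ {j | p < T (j+1)} := by
        simp only [Set.mem_setOf_eq]
        have : c - 1 + 1 = c := by omega
        rw [this, hTc]; exact hp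
      have h2 := Nat.sInf_le hne
      have h3 : F p = sInf {j | p < T (j+1)} := rfl
      omega
    have hFlb : ∀ p, T (F p) ≤ p := by
      intro p
      rcases h : F p with _ | k
      · show T 0 ≤ p; simp [hT, pathT]
      · have h3 : F p = sInf {j | p < T (j+1)} := rfl
        have hk : k < sInf {j | p < T (j+1)} := by omega
        have hnm := Nat.notMem_of_lt_sInf hk
        simp only [Set.mem_setOf_eq, not_lt] at hnm
        exact hnm
    have hTsucc : ∀ j, T (j+1) ≤ T j + m j := fun j => min_le_left _ _
    have hTn : ∀ j, T j ≤ n := pathT_le n m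
    -- vertex-to-block-position map
    have hσlt : ∀ v : Fin n, (v.val % 2) * hh + v.val / 2 < n := by
      intro v
      have hv := v.isLt
      have h2 : v.val % 2 = 0 ∨ v.val % 2 = 1 := by omega
      rcases h2 with h2 | h2 <;> rw [h2]
      · rw [Nat.zero_mul]; omega
      · rw [Nat.one_mul]; omega
    set φ : Fin n → Fin c :=
      fun v => π ⟨F ((v.val % 2) * hh + v.val / 2), hFlt _ (hσlt v)⟩ with hφ
    -- key properness fact
    have key : ∀ x y : Fin n, x.val + 1 = y.val →
        F ((x.val % 2) * hh + x.val / 2) ≠ F ((y.val % 2) * hh + y.val / 2) := by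
      intro x y hxy heq
      rcases Nat.even_or_odd x.val with hx | hx
      · -- x = 2k, y = 2k+1 : positions k and hh + k
        obtain ⟨k, hk⟩ := hx
        have hx2 : x.val % 2 = 0 := by omega
        have hx3 : x.val / 2 = k := by omega
        have hy2 : y.val % 2 = 1 := by omega
        have hy3 : y.val / 2 = k := by omega
        rw [hx2, hx3, hy2, hy3] at heq
        simp only [Nat.zero_mul, Nat.zero_add, Nat.one_mul] at heq
        set j := F k with hj
        have h1 : T j ≤ k := hFlb k
        have h2 : hh + k < T (j + 1) := by
          rw [heq]; exact hFmem _ (by have := y.isLt; omega)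
        have h3 := hTsucc j
        have h4 := hm_le j
        omega
      · -- x = 2k+1, y = 2k+2 : positions hh + k and k+1
        obtain ⟨k, hk⟩ := hx
        have hx2 : x.val % 2 = 1 := by omega
        have hx3 : x.val / 2 = k := by omega
        have hy2 : y.val % 2 = 0 := by omega
        have hy3 : y.val / 2 = k + 1 := by omega
        rw [hx2, hx3, hy2, hy3] at heq
        simp only [Nat.one_mul, Nat.zero_mul, Nat.zero_add] at heq
        set j := F (k+1) with hj
        have h1 : T j ≤ k + 1 := hFlb (k+1)
        have h2 : hh + k < T (j + 1) := by
          rw [← heq]; exact hFmem _ (by have := x.isLt; omega)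
        have h3 := hTsucc j
        have h4 := hm_le j
        have hTj : T j = k + 1 := by omega
        have hmj : m j = hh := by omega
        have hj1 : 1 ≤ j := by
          by_contra h
          have : j = 0 := by omega
          rw [this] at hTj
          simp [hT, pathT] at hTj
          
        -- all blocks before j have size ≥ hh
        have hfull : ∀ i < j, hh ≤ m i := fun i hi => hmj ▸ hm_anti i j (le_of_lt hi)
        have hge : min (j * hh) n ≤ T j := pathT_ge_mul n m hh j hfull j le_rfl
        have hle : T j ≤ j * hh := pathT_le_mul n m hh hm_le j
        have hTjn : T j < n := by
          have := hTn (j+1); omega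
        have hjh : j * hh = k + 1 := by omega
        have hTj1 : T (j+1) = k + 1 + hh := by omega
        have hn2 : n ≤ 2 * hh := by omega
        have h2hh : (j + 1) * hh ≤ 2 * hh := by
          have : (j+1) * hh = j * hh + hh := by ring
          have := hTn (j+1)
          omega
        have hj2 : j + 1 ≤ 2 := Nat.le_of_mul_le_mul_right h2hh hh1
        have hje : j = 1 := by omega
        rw [hje, one_mul] at hjh
        -- k + 1 = hh, T 2 = k+1+hh = 2hh ≤ n ≤ 2hh, and y.val = 2k+2 < n
        have := y.isLt
        have := hTn (j+1)
        omega
    refine ⟨φ, ?_, ?_⟩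
    · intro u v hadj
      rw [SimpleGraph.pathGraph_adj] at hadj
      intro heq
      have heq' : F ((u.val % 2) * hh + u.val / 2) = F ((v.val % 2) * hh + v.val / 2) :=
        congrArg Fin.val (π.injective heq)
      rcases hadj with h | h
      · exact key u v h heq'
      · exact key v u h heq'.symm
    · intro i
      set j : Fin c := π.symm i with hj
      have hmaps : ∀ v ∈ univ.filter fun v => φ v = i,
          (v.val % 2) * hh + v.val / 2 ∈ Finset.Ico (T j.val) (T (j.val + 1)) := by
        intro v hv
        simp only [Finset.mem_filter, Finset.mem_univ, true_and] at hv
        have : (⟨F ((v.val % 2) * hh + v.val / 2), hFlt _ (hσlt v)⟩ : Fin c) = j := by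
          rw [hj]
          exact (Equiv.eq_symm_apply π).mpr hv
        have hFv : F ((v.val % 2) * hh + v.val / 2) = j.val := congrArg Fin.val this
        rw [Finset.mem_Ico, ← hFv]
        exact ⟨hFlb _, hFmem _ (hσlt v)⟩
      have hcard := Finset.card_le_card_of_injOn
        (fun v : Fin n => (v.val % 2) * hh + v.val / 2) hmaps
        (by
          intro u _ v _ huv
          simp only at huv
          have hu := u.isLt
          have hv := v.isLt
          have h2 : u.val % 2 = 0 ∨ u.val % 2 = 1 := by omega
          have h3 : v.val % 2 = 0 ∨ v.val % 2 = 1 := by omega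
          apply Fin.ext
          rcases h2 with h2 | h2 <;> rcases h3 with h3 | h3 <;>
            rw [h2, h3] at huv <;>
            simp only [Nat.zero_mul, Nat.one_mul, Nat.zero_add] at huv <;>
            omega)
      have hIco : (Finset.Ico (T j.val) (T (j.val + 1))).card ≤ m j.val := by
        rw [Nat.card_Ico]
        have := hTsucc j.val
        have := pathT_mono_succ n m j.val
        omega
      have hmj : m j.val = min (b i) hh := by
        have h5 : (⟨j.val, j.isLt⟩ : Fin c) = j := rfl
        simp only [hm, dif_pos j.isLt, h5, hM, hj, dif_pos (π.symm i).isLt, Fin.eta, Equiv.apply_symm_apply]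
      calc (univ.filter fun v => φ v = i).card
          ≤ (Finset.Ico (T j.val) (T (j.val + 1))).card := hcard
        _ ≤ m j.val := hIco
        _ ≤ b i := by rw [hmj]; exact min_le_left _ _
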